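/- For all integers k, j with 1 ≤ j ≤ k, one has C(k, j) · B_{k-j} = k · Σ_{i=j}^{k} (1/i) · S_1(i, j) · S_2(k−1, i−1), where B_{k-j} is the (k−j)-th Bernoulli number, S_1 are the signed Stirling numbers of the first kind, and S_2 are the Stirling numbers of the second kind. -/

import Mathlib

/-- The signed Stirling numbers of the first kind, as coefficients of the
falling factorial `x(x-1)⋯(x-n+1) = Σ_{j=0}^{n} S_1(n,j) x^j`. -/
noncomputable def stirlingFirst (n j : ℕ) : ℚ :=
  (∏ i ∈ Finset.range n, (Polynomial.X - Polynomial.C (i : ℚ))).coeff j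

/-- The (unsigned) Stirling numbers of the second kind
`S_2(k,j) = (1/j!) Σ_{i=0}^{j} (-1)^{j-i} C(j,i) i^k`. -/
def stirlingSecond (k j : ℕ) : ℚ :=
  (1 / (Nat.factorial j : ℚ)) *
    ∑ i ∈ Finset.range (j + 1), (-1 : ℚ) ^ (j - i) * (Nat.choose j i : ℚ) * (i : ℚ) ^ k

open Finset

/-- Auxiliary: `j! * stirlingSecond k j`, with parity written as `(-1)^(i+l)`. -/
def ssAux (p i : ℕ) : ℚ :=
  ∑ l ∈ Finset.range (i + 1), (-1 : ℚ) ^ (i + l) * (Nat.choose i l : ℚ) * (l : ℚ) ^ p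

lemma stirlingSecond_eq (p i : ℕ) : stirlingSecond p i = ssAux p i / (Nat.factorial i : ℚ) := by
  unfold stirlingSecond ssAux
  rw [one_div, inv_mul_eq_div]
  congr 1
  refine Finset.sum_congr rfl fun l hl => ?_
  have hli : l ≤ i := Nat.lt_succ_iff.mp (Finset.mem_range.mp hl)
  obtain ⟨d, rfl⟩ : ∃ d, i = l + d := ⟨i - l, (Nat.add_sub_cancel' hli).symm⟩
  have h1 : l + d - l = d := by omega
  have h2 : l + d + l = 2 * l + d := by ring
  rw [h1, h2, pow_add, pow_mul]
  norm_num

lemma ssAux_add (p i : ℕ) :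
    ∑ t ∈ range (i + 1), (-1 : ℚ) ^ (i + t) * (Nat.choose i t : ℚ) * ((t : ℚ) + 1) ^ p
      = ssAux p (i + 1) + ssAux p i := by
  have e1 : ssAux p (i + 1)
      = (∑ t ∈ range (i + 1),
          (-1 : ℚ) ^ (i + t) * ((Nat.choose i t : ℚ) + (Nat.choose i (t+1) : ℚ)) * ((t : ℚ) + 1) ^ p)
        + (-1 : ℚ) ^ (i + 1) * (0 : ℚ) ^ p := by
    unfold ssAux
    rw [Finset.sum_range_succ']
    congr 1
    · refine sum_congr rfl fun t ht => ?_
      have h : i + 1 + (t + 1) = (i + t) + 2 := by ring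
      rw [h, pow_add, Nat.choose_succ_succ]
      push_cast
      ring
    · simp
  have e3 : ssAux p i
      = (∑ t ∈ range i, -((-1 : ℚ) ^ (i + t) * (Nat.choose i (t+1) : ℚ) * ((t : ℚ) + 1) ^ p))
        + (-1 : ℚ) ^ i * (0 : ℚ) ^ p := by
    unfold ssAux
    rw [Finset.sum_range_succ']
    congr 1
    · refine sum_congr rfl fun t ht => ?_
      have h : i + (t + 1) = (i + t) + 1 := by ring
      rw [h, pow_add]
      push_cast
      ring
    · simp
  have e4 : ∑ t ∈ range (i + 1), (-1 : ℚ) ^ (i + t) * (Nat.choose i (t+1) : ℚ) * ((t : ℚ) + 1) ^ p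
      = ∑ t ∈ range i, (-1 : ℚ) ^ (i + t) * (Nat.choose i (t+1) : ℚ) * ((t : ℚ) + 1) ^ p := by
    rw [Finset.sum_range_succ]
    simp [Nat.choose_succ_self]
  have e2 : (∑ t ∈ range (i + 1),
        (-1 : ℚ) ^ (i + t) * ((Nat.choose i t : ℚ) + (Nat.choose i (t+1) : ℚ)) * ((t : ℚ) + 1) ^ p)
      = (∑ t ∈ range (i + 1), (-1 : ℚ) ^ (i + t) * (Nat.choose i t : ℚ) * ((t : ℚ) + 1) ^ p)
        + ∑ t ∈ range (i + 1), (-1 : ℚ) ^ (i + t) * (Nat.choose i (t+1) : ℚ) * ((t : ℚ) + 1) ^ p := by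
    rw [← Finset.sum_add_distrib]
    exact sum_congr rfl fun t ht => by ring
  rw [Finset.sum_neg_distrib] at e3
  have hp : (-1 : ℚ) ^ (i + 1) = -(-1 : ℚ) ^ i := by rw [pow_succ]; ring
  rw [e2, e4, hp] at e1
  linarith [e1, e3]

lemma ssAux_rec (p i : ℕ) :
    ssAux (p + 1) (i + 1) = ((i : ℚ) + 1) * (ssAux p (i + 1) + ssAux p i) := by
  rw [← ssAux_add]
  unfold ssAux
  rw [Finset.sum_range_succ', Finset.mul_sum]
  have hz : (-1 : ℚ) ^ (i + 1 + 0) * (Nat.choose (i+1) 0 : ℚ) * ((0:ℕ) : ℚ) ^ (p + 1) = 0 := by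
    simp
  rw [hz, add_zero]
  refine sum_congr rfl fun t ht => ?_
  have h : i + 1 + (t + 1) = (i + t) + 2 := by ring
  have hc : ((i : ℚ) + 1) * (Nat.choose i t : ℚ) = (Nat.choose (i+1) (t+1) : ℚ) * ((t : ℚ) + 1) := by
    have := Nat.add_one_mul_choose_eq i t
    have : ((i + 1) * Nat.choose i t : ℚ) = ((Nat.choose (i+1) (t+1) * (t+1) : ℕ) : ℚ) := by
      exact_mod_cast congrArg (Nat.cast : ℕ → ℚ) this
    push_cast at this
    linarith [this]
  rw [h, pow_add]
  push_cast
  linear_combination (-(-1:ℚ) ^ (i + t) * ((t:ℚ) + 1) ^ p) * hc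

lemma ssAux_eq_zero : ∀ p i : ℕ, p < i → ssAux p i = 0 := by
  intro p
  induction p with
  | zero =>
    intro i hi
    have h0 : ((-1 : ℚ) + 1) ^ i = ∑ l ∈ range (i + 1), (-1 : ℚ) ^ l * 1 ^ (i - l) * (Nat.choose i l : ℚ) :=
      add_pow (-1 : ℚ) 1 i
    have h1 : ((-1 : ℚ) + 1) ^ i = 0 := by
      rw [neg_add_cancel, zero_pow (by omega : i ≠ 0)]
    unfold ssAux
    have : ∑ l ∈ range (i + 1), (-1 : ℚ) ^ (i + l) * (Nat.choose i l : ℚ) * (l : ℚ) ^ 0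
        = (-1 : ℚ) ^ i * ∑ l ∈ range (i + 1), (-1 : ℚ) ^ l * 1 ^ (i - l) * (Nat.choose i l : ℚ) := by
      rw [Finset.mul_sum]
      refine sum_congr rfl fun l hl => ?_
      rw [pow_add, pow_zero]
      ring
    rw [this, ← h0, h1, mul_zero]
  | succ p ih =>
    intro i hi
    obtain ⟨i', rfl⟩ : ∃ i', i = i' + 1 := ⟨i - 1, by omega⟩
    rw [ssAux_rec, ih (i' + 1) (by omega), ih i' (by omega)]
    ring

lemma stirlingSecond_eq_zero {p i : ℕ} (h : p < i) : stirlingSecond p i = 0 := by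
  rw [stirlingSecond_eq, ssAux_eq_zero p i h, zero_div]

lemma stirlingSecond_rec (p i : ℕ) :
    stirlingSecond (p + 1) (i + 1)
      = ((i : ℚ) + 1) * stirlingSecond p (i + 1) + stirlingSecond p i := by
  rw [stirlingSecond_eq, stirlingSecond_eq, stirlingSecond_eq, ssAux_rec, Nat.factorial_succ]
  have h1 : (Nat.factorial i : ℚ) ≠ 0 := by exact_mod_cast (Nat.factorial_pos i).ne'
  have h2 : ((i : ℚ) + 1) ≠ 0 := by positivity
  push_cast
  field_simp

lemma desc_cast_mul (m i : ℕ) :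
    (m : ℚ) * (m.descFactorial i : ℚ)
      = (m.descFactorial (i + 1) : ℚ) + (i : ℚ) * (m.descFactorial i : ℚ) := by
  rcases le_or_gt i m with h | h
  · rw [Nat.descFactorial_succ, Nat.cast_mul, Nat.cast_sub h]
    ring
  · rw [Nat.descFactorial_eq_zero_iff_lt.mpr h,
      Nat.descFactorial_eq_zero_iff_lt.mpr (Nat.lt_succ_of_lt h)]
    simp

lemma newton : ∀ p m : ℕ,
    ∑ i ∈ range (p + 1), stirlingSecond p i * (m.descFactorial i : ℚ) = (m : ℚ) ^ p := by
  intro p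
  induction p with
  | zero =>
    intro m
    simp [stirlingSecond]
  | succ p ih =>
    intro m
    have h0 : stirlingSecond (p + 1) 0 = 0 := by
      simp [stirlingSecond, zero_pow (Nat.succ_ne_zero p)]
    rw [Finset.sum_range_succ']
    simp only [h0, zero_mul, add_zero]
    have key : ∑ t ∈ range (p + 1),
          ((t : ℚ) + 1) * stirlingSecond p (t + 1) * (m.descFactorial (t + 1) : ℚ)
        = ∑ i ∈ range (p + 1), (i : ℚ) * stirlingSecond p i * (m.descFactorial i : ℚ) := by
      have h1 := Finset.sum_range_succ'
        (fun i => (i : ℚ) * stirlingSecond p i * (m.descFactorial i : ℚ)) (p + 1)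
      have h2 := Finset.sum_range_succ
        (fun i => (i : ℚ) * stirlingSecond p i * (m.descFactorial i : ℚ)) (p + 1)
      simp only [stirlingSecond_eq_zero (Nat.lt_succ_self p), Nat.cast_zero, zero_mul, mul_zero,
        add_zero, zero_add] at h1 h2
      rw [h2] at h1
      push_cast at h1
      exact h1.symm
    calc ∑ t ∈ range (p + 1), stirlingSecond (p + 1) (t + 1) * (m.descFactorial (t + 1) : ℚ)
        = ∑ t ∈ range (p + 1),
            (((t : ℚ) + 1) * stirlingSecond p (t + 1) * (m.descFactorial (t + 1) : ℚ)
              + stirlingSecond p t * (m.descFactorial (t + 1) : ℚ)) := by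
          refine sum_congr rfl fun t ht => ?_
          rw [stirlingSecond_rec]
          ring
      _ = ∑ i ∈ range (p + 1), (i : ℚ) * stirlingSecond p i * (m.descFactorial i : ℚ)
            + ∑ t ∈ range (p + 1), stirlingSecond p t * (m.descFactorial (t + 1) : ℚ) := by
          rw [Finset.sum_add_distrib, key]
      _ = ∑ i ∈ range (p + 1), stirlingSecond p i * ((m : ℚ) * (m.descFactorial i : ℚ)) := by
          rw [← Finset.sum_add_distrib]
          refine sum_congr rfl fun i hi => ?_
          rw [desc_cast_mul]
          ring
      _ = (m : ℚ) * ∑ i ∈ range (p + 1), stirlingSecond p i * (m.descFactorial i : ℚ) := by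
          rw [Finset.mul_sum]
          exact sum_congr rfl fun i hi => by ring
      _ = (m : ℚ) ^ (p + 1) := by rw [ih m, pow_succ]; ring

lemma sum_descFactorial (i : ℕ) : ∀ n : ℕ,
    (i + 1) * ∑ m ∈ range n, m.descFactorial i = n.descFactorial (i + 1) := by
  intro n
  induction n with
  | zero => simp
  | succ n ihn =>
    rw [Finset.sum_range_succ, Nat.mul_add, ihn, Nat.succ_descFactorial_succ]
    rcases le_or_gt i n with h | h
    · rw [Nat.descFactorial_succ]
      have : n - i + (i + 1) = n + 1 := by omega
      rw [← Nat.add_mul, this]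
    · rw [Nat.descFactorial_eq_zero_iff_lt.mpr h,
        Nat.descFactorial_eq_zero_iff_lt.mpr (Nat.lt_succ_of_lt h)]
      simp

lemma faul (p n : ℕ) :
    ∑ i ∈ range (p + 1), stirlingSecond p i / ((i : ℚ) + 1) * (n.descFactorial (i + 1) : ℚ)
      = ∑ m ∈ range n, (m : ℚ) ^ p := by
  have hdf : ∀ i : ℕ, (n.descFactorial (i + 1) : ℚ)
      = ((i : ℚ) + 1) * ∑ m ∈ range n, (m.descFactorial i : ℚ) := by
    intro i
    have h := sum_descFactorial i n
    have := congrArg (Nat.cast : ℕ → ℚ) h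
    push_cast at this
    exact this.symm
  calc ∑ i ∈ range (p + 1), stirlingSecond p i / ((i : ℚ) + 1) * (n.descFactorial (i + 1) : ℚ)
      = ∑ i ∈ range (p + 1), ∑ m ∈ range n, stirlingSecond p i * (m.descFactorial i : ℚ) := by
        refine Finset.sum_congr rfl fun i hi => ?_
        have hc : stirlingSecond p i / ((i : ℚ) + 1) * ((i : ℚ) + 1) = stirlingSecond p i :=
          div_mul_cancel₀ _ (by positivity)
        rw [hdf i, ← mul_assoc, hc, Finset.mul_sum]
    _ = ∑ m ∈ range n, ∑ i ∈ range (p + 1), stirlingSecond p i * (m.descFactorial i : ℚ) :=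
        Finset.sum_comm
    _ = ∑ m ∈ range n, (m : ℚ) ^ p := sum_congr rfl fun m _ => newton p m

open Polynomial in
lemma polyeq (p : ℕ) :
    (∑ i ∈ range (p + 1), Polynomial.C (stirlingSecond p i / ((i : ℚ) + 1))
        * descPochhammer ℚ (i + 1))
      = ∑ i ∈ range (p + 1),
          Polynomial.C (_root_.bernoulli i * ((p + 1).choose i : ℚ) / ((p : ℚ) + 1))
            * Polynomial.X ^ (p + 1 - i) := by
  set L := ∑ i ∈ range (p + 1), Polynomial.C (stirlingSecond p i / ((i : ℚ) + 1))
      * descPochhammer ℚ (i + 1) with hL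
  set R := ∑ i ∈ range (p + 1),
      Polynomial.C (_root_.bernoulli i * ((p + 1).choose i : ℚ) / ((p : ℚ) + 1))
        * Polynomial.X ^ (p + 1 - i) with hR
  have heval : ∀ n : ℕ, L.eval (n : ℚ) = R.eval (n : ℚ) := by
    intro n
    rw [hL, hR, eval_finset_sum, eval_finset_sum]
    simp only [eval_mul, eval_C, eval_pow, eval_X]
    have h1 : ∀ i ∈ range (p + 1),
        stirlingSecond p i / ((i : ℚ) + 1) * (descPochhammer ℚ (i + 1)).eval (n : ℚ)
          = stirlingSecond p i / ((i : ℚ) + 1) * (n.descFactorial (i + 1) : ℚ) := by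
      intro i _
      rw [descPochhammer_eval_eq_descFactorial]
    rw [sum_congr rfl h1, faul, _root_.sum_range_pow]
    refine sum_congr rfl fun i hi => ?_
    ring
  have hsub : L - R = 0 := by
    apply eq_zero_of_infinite_isRoot
    apply Set.infinite_of_injective_forall_mem (f := fun n : ℕ => (n : ℚ))
      Nat.cast_injective
    intro n
    simp only [Set.mem_setOf_eq, IsRoot, eval_sub, heval n, sub_self]
  exact sub_eq_zero.mp hsub

open Polynomial in
lemma descPochhammer_eq_prod (n : ℕ) :
    descPochhammer ℚ n = ∏ i ∈ range n, (X - Polynomial.C (i : ℚ)) := by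
  induction n with
  | zero => simp [descPochhammer]
  | succ n ih =>
    rw [descPochhammer_succ_right, prod_range_succ, ih, Polynomial.C_eq_natCast]

lemma stirlingFirst_eq_coeff (n j : ℕ) :
    stirlingFirst n j = (descPochhammer ℚ n).coeff j := by
  rw [stirlingFirst, descPochhammer_eq_prod]

lemma stirlingFirst_eq_zero {n j : ℕ} (h : n < j) : stirlingFirst n j = 0 := by
  rw [stirlingFirst_eq_coeff]
  exact Polynomial.coeff_eq_zero_of_natDegree_lt (by rwa [descPochhammer_natDegree])

/-- for `1 ≤ j ≤ k`,
`C(k,j) B_{k-j} = k Σ_{i=j}^{k} (1/i) S_1(i,j) S_2(k-1,i-1)`. -/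
theorem choose_mul_bernoulli_eq' (k j : ℕ) (hj : 1 ≤ j) (hjk : j ≤ k) :
    (Nat.choose k j : ℚ) * bernoulli (k - j) =
      (k : ℚ) *
        ∑ i ∈ Finset.Icc j k,
          1 / (i : ℚ) * stirlingFirst i j * stirlingSecond (k - 1) (i - 1) := by
  obtain ⟨p, rfl⟩ : ∃ p, k = p + 1 := ⟨k - 1, by omega⟩
  have hc := congrArg (fun q : Polynomial ℚ => q.coeff j) (polyeq p)
  simp only [Polynomial.finset_sum_coeff, Polynomial.coeff_C_mul, Polynomial.coeff_X_pow] at hc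
  have hR : ∑ i ∈ range (p + 1),
      _root_.bernoulli i * ((p + 1).choose i : ℚ) / ((p : ℚ) + 1) * (if j = p + 1 - i then 1 else 0)
      = _root_.bernoulli (p + 1 - j) * ((p + 1).choose j : ℚ) / ((p : ℚ) + 1) := by
    rw [Finset.sum_eq_single (p + 1 - j)]
    · rw [if_pos (by omega), mul_one, Nat.choose_symm hjk]
    · intro i hi hne
      rw [if_neg (by simp at hi; omega), mul_zero]
    · intro h
      exact absurd (Finset.mem_range.mpr (by omega)) h
  have hsum : ∑ i ∈ Finset.Icc j (p + 1),
      1 / (i : ℚ) * stirlingFirst i j * stirlingSecond (p + 1 - 1) (i - 1)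
      = ∑ x ∈ range (p + 1), stirlingSecond p x / ((x : ℚ) + 1) * (descPochhammer ℚ (x + 1)).coeff j := by
    have hsub : Finset.Icc j (p + 1) ⊆ Finset.Icc 1 (p + 1) := Finset.Icc_subset_Icc hj le_rfl
    rw [Finset.sum_subset hsub (fun x hx hnx => ?_), ← Finset.Ico_add_one_right_eq_Icc, Finset.sum_Ico_eq_sum_range]
    · have hrange : p + 1 + 1 - 1 = p + 1 := by omega
      rw [hrange]
      refine Finset.sum_congr rfl fun i hi => ?_
      have h1 : 1 + i - 1 = i := by omega
      have h2 : p + 1 - 1 = p := rfl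
      rw [h1, h2, stirlingFirst_eq_coeff]
      have h3 : (1 : ℕ) + i = i + 1 := by omega
      rw [h3]
      push_cast
      ring
    · have : x < j := by
        simp only [Finset.mem_Icc] at hx hnx
        omega
      rw [stirlingFirst_eq_zero this]
      ring
  rw [hsum, hc, hR]
  have hne : (p : ℚ) + 1 ≠ 0 := by positivity
  push_cast
  field_simp
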